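/- For every integer n ≥ 1: 2 Σ_{k=1}^{n} k (−1)^{n+k} binom(2n, n+k) = (−1)^{n+1} · ((n+1)/(2n−1)) · binom(2n, n+1). -/

import Mathlib

/-- `2 Σ_{k=1}^n k (-1)^{n+k} binom(2n,n+k) = (-1)^{n+1} ((n+1)/(2n-1)) binom(2n,n+1)`. -/
theorem stmt_14 (n : ℕ) (hn : 1 ≤ n) :
    2 * ∑ k ∈ Finset.Icc 1 n,
        ((k : ℝ) * (-1 : ℝ) ^ (n + k) * (Nat.choose (2 * n) (n + k) : ℝ))
      = (-1 : ℝ) ^ (n + 1) * (((n : ℝ) + 1) / (2 * (n : ℝ) - 1))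
        * (Nat.choose (2 * n) (n + 1) : ℝ) := by
  obtain ⟨m, rfl⟩ : ∃ m, n = m + 1 := ⟨n - 1, (Nat.succ_pred_eq_of_pos hn).symm⟩
  -- telescoping function
  set f : ℕ → ℝ := fun k => (-1 : ℝ) ^ k *
      ((k : ℝ) * (Nat.choose (2 * m + 1) (m + k) : ℝ) - (Nat.choose (2 * m) (m + k) : ℝ)) with hf
  have hterm : ∀ k : ℕ,
      ((k : ℝ) * (-1 : ℝ) ^ ((m + 1) + k) * (Nat.choose (2 * (m + 1)) ((m + 1) + k) : ℝ))
        = (-1 : ℝ) ^ (m + 1) * (f k - f (k + 1)) := by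
    intro k
    have P1 : Nat.choose (2 * m + 2) (m + k + 1)
        = Nat.choose (2 * m + 1) (m + k) + Nat.choose (2 * m + 1) (m + k + 1) :=
      Nat.choose_succ_succ (2 * m + 1) (m + k)
    have P2 : Nat.choose (2 * m + 1) (m + k + 1)
        = Nat.choose (2 * m) (m + k) + Nat.choose (2 * m) (m + k + 1) :=
      Nat.choose_succ_succ (2 * m) (m + k)
    have e1 : 2 * (m + 1) = 2 * m + 2 := by ring
    have e2 : (m + 1) + k = m + k + 1 := by ring
    have e3 : m + (k + 1) = m + k + 1 := by ring
    simp only [hf]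
    rw [e1, e2, e3, P1, P2]
    push_cast
    ring
  rw [Finset.sum_congr rfl (fun k _ => hterm k), ← Finset.mul_sum]
  have htel : ∀ N : ℕ, ∑ k ∈ Finset.Icc 1 N, (f k - f (k + 1)) = f 1 - f (N + 1) := by
    intro N
    induction N with
    | zero => simp
    | succ N ih =>
        rw [Finset.sum_Icc_succ_top (by omega), ih]
        ring
  rw [htel]
  have hfm2 : f (m + 1 + 1) = 0 := by
    have h1 : Nat.choose (2 * m + 1) (m + (m + 1 + 1)) = 0 :=
      Nat.choose_eq_zero_of_lt (by omega)
    have h2 : Nat.choose (2 * m) (m + (m + 1 + 1)) = 0 :=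
      Nat.choose_eq_zero_of_lt (by omega)
    simp [hf, h1, h2]
  have hf1 : f 1 = -(Nat.choose (2 * m) m : ℝ) := by
    have P : Nat.choose (2 * m + 1) (m + 1)
        = Nat.choose (2 * m) m + Nat.choose (2 * m) (m + 1) :=
      Nat.choose_succ_succ (2 * m) m
    simp only [hf, P]
    push_cast
    ring
  rw [hfm2, hf1]
  -- the binomial identity: (m+2) * C(2(m+1), m+2) = 2 * (2m+1) * C(2m, m), over ℝ
  have h1 : ((2 : ℝ) * m + 2) * (Nat.choose (2 * m + 1) (m + 1) : ℝ)
      = (Nat.choose (2 * m + 2) (m + 2) : ℝ) * ((m : ℝ) + 2) := by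
    have := Nat.add_one_mul_choose_eq (2 * m + 1) (m + 1)
    exact_mod_cast congrArg (fun x : ℕ => (x : ℝ)) this
  have h2 : ((2 : ℝ) * m + 1) * (Nat.choose (2 * m) m : ℝ)
      = (Nat.choose (2 * m + 1) (m + 1) : ℝ) * ((m : ℝ) + 1) := by
    have := Nat.add_one_mul_choose_eq (2 * m) m
    exact_mod_cast congrArg (fun x : ℕ => (x : ℝ)) this
  have hcast : ((m : ℝ) + 2) * (Nat.choose (2 * (m + 1)) ((m + 1) + 1) : ℝ)
      = 2 * (2 * (m : ℝ) + 1) * (Nat.choose (2 * m) m : ℝ) := by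
    have e1 : 2 * (m + 1) = 2 * m + 2 := by ring
    have e2 : (m + 1) + 1 = m + 2 := by ring
    rw [e1, e2]
    have hm1 : ((m : ℝ) + 1) ≠ 0 := by positivity
    apply mul_left_cancel₀ hm1
    linear_combination (-(m : ℝ) - 1) * h1 + (-(2 * (m : ℝ) + 2)) * h2
  have hden : (2 * (((m : ℕ) + 1 : ℕ) : ℝ) - 1) ≠ 0 := by
    push_cast
    intro h; nlinarith [Nat.cast_nonneg (α := ℝ) m]
  push_cast at hcast hden ⊢
  field_simp
  linear_combination (-1 : ℝ) * (-1 : ℝ) ^ m * hcast
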